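/- Let g be a multiplicative read-once polynomial over a field F with variable set V of size n ≥ 1, where every leaf of the formula computes a polynomial of the form a·xi with a ≠ 0 (i.e., each leaf's affine form vanishes only at xi = 0). Then for any variable xn ∈ V, the restriction g|_{xn=0} minus its constant term has total degree at most n − 2 (setting xn = 0 reduces the degree of g by at least 2) whenever n ≥ 2. -/

import Mathlib

set_option maxHeartbeats 1000000

open MvPolynomial

/-- Substitute the constant `a` for variable `i`. -/
noncomputable def rst {F : Type*} [Field F] {n : ℕ} (i : Fin n) (a : F)
    (p : MvPolynomial (Fin n) F) : MvPolynomial (Fin n) F :=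
  aeval (fun k : Fin n => if k = i then (C a : MvPolynomial (Fin n) F) else X k) p

/-- Partial derivative of a multilinear polynomial: p|_{xi=1} - p|_{xi=0}. -/
noncomputable def pder {F : Type*} [Field F] {n : ℕ} (i : Fin n)
    (p : MvPolynomial (Fin n) F) : MvPolynomial (Fin n) F :=
  rst i 1 p - rst i 0 p

/-- Multiplicative read-once polynomials whose leaves are homogeneous linear forms `a * xi`, `a ≠ 0`. -/
inductive IsMulROP0 {F : Type*} [Field F] {n : ℕ} : MvPolynomial (Fin n) F → Prop
  | leaf (a : F) (ha : a ≠ 0) (i : Fin n) : IsMulROP0 (C a * X i)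
  | mul (a b : F) (ha : a ≠ 0) {f g : MvPolynomial (Fin n) F} (hdisj : Disjoint f.vars g.vars)
      (hf : IsMulROP0 f) (hg : IsMulROP0 g) : IsMulROP0 (C a * (f * g) + C b)

namespace StmtAux

variable {F : Type*} [Field F] {N : ℕ}

lemma mem_vars_of_mem_support {p : MvPolynomial (Fin N) F} {m : Fin N →₀ ℕ} {j : Fin N}
    (hm : m ∈ p.support) (hj : m j ≠ 0) : j ∈ p.vars :=
  (mem_vars j).mpr ⟨m, hm, Finsupp.mem_support_iff.mpr hj⟩

lemma coeff_mul_disjoint {f g : MvPolynomial (Fin N) F} (h : Disjoint f.vars g.vars)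
    {m m' : Fin N →₀ ℕ} (hm : m ∈ f.support) (hm' : m' ∈ g.support) :
    (f * g).coeff (m + m') = f.coeff m * g.coeff m' := by
  classical
  rw [coeff_mul]
  refine Finset.sum_eq_single (m, m') ?_ ?_
  · rintro ⟨u, v⟩ huv hne
    rw [Finset.HasAntidiagonal.mem_antidiagonal] at huv
    by_cases hu : u ∈ f.support
    · by_cases hv : v ∈ g.support
      · exfalso
        apply hne
        have hum : u = m := by
          ext j
          have hsum : u j + v j = m j + m' j := by
            have := congrArg (fun w : Fin N →₀ ℕ => w j) huv
            simpa [Finsupp.add_apply] using this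
          by_cases hj : j ∈ f.vars
          · have hvj : v j = 0 := by
              by_contra hvj
              exact (Finset.disjoint_left.mp h hj) (mem_vars_of_mem_support hv hvj)
            have hm'j : m' j = 0 := by
              by_contra hmj
              exact (Finset.disjoint_left.mp h hj) (mem_vars_of_mem_support hm' hmj)
            omega
          · have huj : u j = 0 := by
              by_contra huj
              exact hj (mem_vars_of_mem_support hu huj)
            have hmj : m j = 0 := by
              by_contra hmj
              exact hj (mem_vars_of_mem_support hm hmj)
            omega
        have hvm : v = m' := by
          subst hum
          exact add_left_cancel huv
        exact Prod.ext hum hvm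
      · rw [MvPolynomial.notMem_support_iff.mp hv, mul_zero]
    · rw [MvPolynomial.notMem_support_iff.mp hu, zero_mul]
  · intro hmem
    exact absurd (by simp) hmem

lemma rop_exists {f : MvPolynomial (Fin N) F} (hf : IsMulROP0 f) :
    ∃ m ∈ f.support, m ≠ 0 := by
  induction hf with
  | leaf a ha i =>
      refine ⟨Finsupp.single i 1, ?_, by simp⟩
      rw [MvPolynomial.mem_support_iff]
      simp [coeff_C_mul, coeff_X', ha]
  | mul a b ha hdisj hp hq ihp ihq =>
      obtain ⟨m, hm, hm0⟩ := ihp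
      obtain ⟨m', hm', _⟩ := ihq
      have hmm : m + m' ≠ 0 := by
        intro h
        exact hm0 ((Finsupp.add_eq_zero_iff m m').mp h).1
      refine ⟨m + m', ?_, hmm⟩
      rw [MvPolynomial.mem_support_iff, coeff_add, coeff_C_mul,
        coeff_mul_disjoint hdisj hm hm']
      have hb : coeff (m + m') (C b : MvPolynomial (Fin N) F) = 0 := by
        rw [coeff_C, if_neg (fun h => hmm h.symm)]
      rw [hb, add_zero]
      exact mul_ne_zero ha (mul_ne_zero (MvPolynomial.mem_support_iff.mp hm)
        (MvPolynomial.mem_support_iff.mp hm'))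

lemma rop_vars_nonempty {f : MvPolynomial (Fin N) F} (hf : IsMulROP0 f) :
    f.vars.Nonempty := by
  obtain ⟨m, hm, hm0⟩ := rop_exists hf
  obtain ⟨j, hj⟩ := Finsupp.support_nonempty_iff.mpr hm0
  exact ⟨j, mem_vars_of_mem_support hm (Finsupp.mem_support_iff.mp hj)⟩

lemma vars_add_C (p : MvPolynomial (Fin N) F) (b : F) : (p + C b).vars = p.vars := by
  have key : ∀ (q : MvPolynomial (Fin N) F) (c : F) (j : Fin N),
      j ∈ q.vars → j ∈ (q + C c).vars := by
    intro q c j hj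
    obtain ⟨m, hm, hjm⟩ := (mem_vars j).mp hj
    have hm0 : m ≠ 0 := by
      intro h
      rw [h] at hjm
      simp at hjm
    refine (mem_vars j).mpr ⟨m, ?_, hjm⟩
    rw [MvPolynomial.mem_support_iff, coeff_add, coeff_C, if_neg (fun h => hm0 h.symm),
      add_zero]
    exact MvPolynomial.mem_support_iff.mp hm
  apply Finset.Subset.antisymm
  · intro j hj
    have := key (p + C b) (-b) j hj
    rwa [add_assoc, ← C_add, add_neg_cancel, C_0, add_zero] at this
  · intro j hj
    exact key p b j hj

lemma rop_vars_node {f g : MvPolynomial (Fin N) F} (hf : IsMulROP0 f) (hg : IsMulROP0 g)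
    (hdisj : Disjoint f.vars g.vars) (a b : F) (ha : a ≠ 0) :
    (C a * (f * g) + C b).vars = f.vars ∪ g.vars := by
  rw [vars_add_C, vars_C_mul _ ha]
  refine Finset.Subset.antisymm (vars_mul f g) ?_
  intro j hj
  rcases Finset.mem_union.mp hj with hj | hj
  · obtain ⟨m, hm, hjm⟩ := (mem_vars j).mp hj
    obtain ⟨m', hm', _⟩ := rop_exists hg
    refine (mem_vars j).mpr ⟨m + m', ?_, ?_⟩
    · rw [MvPolynomial.mem_support_iff, coeff_mul_disjoint hdisj hm hm']
      exact mul_ne_zero (MvPolynomial.mem_support_iff.mp hm)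
        (MvPolynomial.mem_support_iff.mp hm')
    · rw [Finsupp.mem_support_iff, Finsupp.add_apply]
      have := Finsupp.mem_support_iff.mp hjm
      omega
  · obtain ⟨m', hm', hjm⟩ := (mem_vars j).mp hj
    obtain ⟨m, hm, _⟩ := rop_exists hf
    refine (mem_vars j).mpr ⟨m + m', ?_, ?_⟩
    · rw [MvPolynomial.mem_support_iff, coeff_mul_disjoint hdisj hm hm']
      exact mul_ne_zero (MvPolynomial.mem_support_iff.mp hm)
        (MvPolynomial.mem_support_iff.mp hm')
    · rw [Finsupp.mem_support_iff, Finsupp.add_apply]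
      have := Finsupp.mem_support_iff.mp hjm
      omega

lemma degreeOf_eq_zero_of_not_mem_vars {p : MvPolynomial (Fin N) F} {i : Fin N}
    (h : i ∉ p.vars) : degreeOf i p = 0 := by
  rw [degreeOf_eq_sup]
  refine Nat.le_antisymm (Finset.sup_le fun m hm => ?_) (Nat.zero_le _)
  by_contra hmi
  exact h (mem_vars_of_mem_support hm (by omega))

lemma rop_multilinear {f : MvPolynomial (Fin N) F} (hf : IsMulROP0 f) (i : Fin N) :
    degreeOf i f ≤ 1 := by
  induction hf with
  | leaf a ha j =>
      refine (degreeOf_C_mul_le _ _ _).trans ?_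
      rw [degreeOf_X]
      split <;> omega
  | mul a b ha hdisj hp hq ihp ihq =>
      rename_i p q
      refine (degreeOf_add_le _ _ _).trans ?_
      rw [degreeOf_C, max_eq_left (Nat.zero_le _)]
      refine (degreeOf_C_mul_le _ _ _).trans ?_
      refine (degreeOf_mul_le _ _ _).trans ?_
      by_cases hi : i ∈ p.vars
      · have h0 : degreeOf i q = 0 :=
          degreeOf_eq_zero_of_not_mem_vars (Finset.disjoint_left.mp hdisj hi)
        omega
      · have h0 : degreeOf i p = 0 := degreeOf_eq_zero_of_not_mem_vars hi
        omega

lemma totalDegree_le_card_vars {p : MvPolynomial (Fin N) F}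
    (h : ∀ i, degreeOf i p ≤ 1) : p.totalDegree ≤ p.vars.card := by
  rw [totalDegree]
  refine Finset.sup_le fun m hm => ?_
  have hsub : m.support ⊆ p.vars := by
    intro j hj
    exact mem_vars_of_mem_support hm (Finsupp.mem_support_iff.mp hj)
  calc m.sum (fun _ e => e) = ∑ j ∈ m.support, m j := rfl
    _ ≤ ∑ _j ∈ m.support, 1 := by
        refine Finset.sum_le_sum fun j hj => ?_
        exact (monomial_le_degreeOf j hm).trans (h j)
    _ = m.support.card := by simp
    _ ≤ p.vars.card := Finset.card_le_card hsub

lemma rst_eq_self {i : Fin N} {c : F} {p : MvPolynomial (Fin N) F} (h : i ∉ p.vars) :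
    rst i c p = p := by
  refine hom_congr_vars (f₁ := (aeval (fun k : Fin N =>
      if k = i then (C c : MvPolynomial (Fin N) F) else X k)).toRingHom)
    (f₂ := RingHom.id _) ?_ ?_ rfl
  · ext a
    simp [algebraMap_eq]
  · intro j hj _
    simp only [AlgHom.toRingHom_eq_coe, RingHom.coe_coe, aeval_X, RingHom.id_apply]
    rw [if_neg]
    intro hji
    subst hji
    exact h hj

lemma rst_leaf (a : F) (i : Fin N) : rst i 0 (C a * X i) = 0 := by
  rw [rst, map_mul, aeval_C, aeval_X, if_pos rfl, algebraMap_eq, C_0, mul_zero]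

lemma rst_node (x : Fin N) (a b : F) (f g : MvPolynomial (Fin N) F) :
    rst x 0 (C a * (f * g) + C b) = C a * (rst x 0 f * rst x 0 g) + C b := by
  rw [rst, map_add, map_mul, map_mul, aeval_C, aeval_C, algebraMap_eq]
  rfl

/-- The computation at an internal node, assuming the subtree containing `x` has ≥ 2 vars. -/
lemma key2 {f g : MvPolynomial (Fin N) F} (hgml : ∀ i, degreeOf i g ≤ 1)
    (a b : F) (x : Fin N) (hf2 : 2 ≤ f.vars.card)
    (ihf : (rst x 0 f - C ((rst x 0 f).coeff 0)).totalDegree ≤ f.vars.card - 2) :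
    ((C a * (rst x 0 f * g) + C b)
        - C ((C a * (rst x 0 f * g) + C b).coeff 0)).totalDegree
      ≤ f.vars.card + g.vars.card - 2 := by
  set A := rst x 0 f with hA
  set c₁ := A.coeff 0 with hc₁
  set r := A - C c₁ with hr
  set c₂ := g.coeff 0 with hc₂
  set s := g - C c₂ with hs
  have hr0 : r.coeff 0 = 0 := by
    rw [hr, MvPolynomial.coeff_sub, coeff_C, if_pos rfl, sub_self]
  have hs0 : s.coeff 0 = 0 := by
    rw [hs, MvPolynomial.coeff_sub, coeff_C, if_pos rfl, sub_self]
  have hAeq : A = C c₁ + r := by rw [hr]; ring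
  have hgeq : g = C c₂ + s := by rw [hs]; ring
  have hA0 : constantCoeff A = c₁ := by rw [constantCoeff_eq]
  have hg0 : constantCoeff g = c₂ := by rw [constantCoeff_eq]
  have hPc : (C a * (A * g) + C b).coeff 0 = a * (c₁ * c₂) + b := by
    rw [← constantCoeff_eq, map_add, map_mul, map_mul, constantCoeff_C, constantCoeff_C,
      hA0, hg0]
  have hident : C a * (A * g) + C b - C ((C a * (A * g) + C b).coeff 0)
      = C a * (C c₁ * s + r * C c₂ + r * s) := by
    rw [hPc, C_add, C_mul, C_mul]
    nth_rewrite 1 [hAeq]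
    nth_rewrite 1 [hgeq]
    ring
  rw [hident]
  have hds : s.totalDegree ≤ g.vars.card := by
    rw [hs]
    exact (totalDegree_sub_C_le _ _).trans (totalDegree_le_card_vars hgml)
  have hdr : r.totalDegree ≤ f.vars.card - 2 := ihf
  have h1 : (C c₁ * s).totalDegree ≤ f.vars.card + g.vars.card - 2 := by
    refine (totalDegree_mul _ _).trans ?_
    have := totalDegree_C (σ := Fin N) c₁
    omega
  have h2 : (r * C c₂).totalDegree ≤ f.vars.card + g.vars.card - 2 := by
    refine (totalDegree_mul _ _).trans ?_
    have := totalDegree_C (σ := Fin N) c₂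
    omega
  have h3 : (r * s).totalDegree ≤ f.vars.card + g.vars.card - 2 := by
    refine (totalDegree_mul _ _).trans ?_
    omega
  refine (totalDegree_mul _ _).trans ?_
  have hCa := totalDegree_C (σ := Fin N) a
  have hsum : (C c₁ * s + r * C c₂ + r * s).totalDegree
      ≤ f.vars.card + g.vars.card - 2 := by
    refine (totalDegree_add _ _).trans ?_
    exact max_le ((totalDegree_add _ _).trans (max_le h1 h2)) h3
  omega

lemma key {f g : MvPolynomial (Fin N) F} (hf : IsMulROP0 f) (hg : IsMulROP0 g)
    (hdisj : Disjoint f.vars g.vars) (a b : F) (ha : a ≠ 0) {x : Fin N} (hx : x ∈ f.vars)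
    (ihf : (rst x 0 f - C ((rst x 0 f).coeff 0)).totalDegree ≤ f.vars.card - 2) :
    ((rst x 0 (C a * (f * g) + C b)) - C ((rst x 0 (C a * (f * g) + C b)).coeff 0)).totalDegree
      ≤ (C a * (f * g) + C b).vars.card - 2 := by
  have hxg : x ∉ g.vars := Finset.disjoint_left.mp hdisj hx
  have hrstg : rst x 0 g = g := rst_eq_self hxg
  have hcard : (C a * (f * g) + C b).vars.card = f.vars.card + g.vars.card := by
    rw [rop_vars_node hf hg hdisj a b ha, Finset.card_union_of_disjoint hdisj]
  rw [rst_node, hrstg, hcard]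
  rcases hf with ⟨a', ha', i⟩ | @⟨a₁, b₁, ha₁, p, q, hd₁, hp₁, hq₁⟩
  · -- f is a leaf containing x
    have hxi : x = i := by
      rw [vars_C_mul _ ha', vars_X, Finset.mem_singleton] at hx
      exact hx
    subst hxi
    rw [rst_leaf, zero_mul, mul_zero, zero_add]
    have hb : coeff 0 (C b : MvPolynomial (Fin N) F) = b := by simp
    rw [hb, sub_self, totalDegree_zero]
    exact Nat.zero_le _
  · -- f is an internal node, so f.vars.card ≥ 2
    have hf2 : 2 ≤ (C a₁ * (p * q) + C b₁).vars.card := by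
      rw [rop_vars_node hp₁ hq₁ hd₁ a₁ b₁ ha₁, Finset.card_union_of_disjoint hd₁]
      have h1 := Finset.card_pos.mpr (rop_vars_nonempty hp₁)
      have h2 := Finset.card_pos.mpr (rop_vars_nonempty hq₁)
      omega
    exact key2 (rop_multilinear hg) a b x hf2 ihf

lemma main {f : MvPolynomial (Fin N) F} (hf : IsMulROP0 f) :
    ∀ x ∈ f.vars, (rst x 0 f - C ((rst x 0 f).coeff 0)).totalDegree ≤ f.vars.card - 2 := by
  induction hf with
  | leaf a ha i =>
      intro x hx
      rw [vars_C_mul _ ha, vars_X, Finset.mem_singleton] at hx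
      subst hx
      rw [rst_leaf]
      have h0 : coeff 0 (0 : MvPolynomial (Fin N) F) = 0 := by simp
      rw [h0, C_0, sub_self, totalDegree_zero]
      exact Nat.zero_le _
  | mul a b ha hdisj hp hq ihp ihq =>
      rename_i p q
      intro x hx
      rw [rop_vars_node hp hq hdisj a b ha] at hx
      rcases Finset.mem_union.mp hx with h | h
      · exact key hp hq hdisj a b ha h (ihp x h)
      · have hcomm : C a * (p * q) + C b = C a * (q * p) + C b := by ring
        rw [hcomm]
        exact key hq hp hdisj.symm a b ha h (ihq x h)

end StmtAux

theorem stmt14 {F : Type*} [Field F] {N : ℕ} (g : MvPolynomial (Fin N) F) {n : ℕ}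
    (hg : IsMulROP0 g) (hn : g.vars.card = n) (hn2 : 2 ≤ n)
    (x : Fin N) (hx : x ∈ g.vars) :
    (rst x 0 g - C ((rst x 0 g).coeff 0)).totalDegree ≤ n - 2 := by
  rw [← hn]
  exact StmtAux.main hg x hx
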